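/- Let ρ ∈ (−1, 1) and x ∈ ℝ. Let μ be the bivariate Gaussian probability measure on ℝ² with mean vector (0, 0) and covariance matrix [[1, ρ], [ρ, 1]]. Then μ({(z₁, z₂) ∈ ℝ² : z₁ ≤ x and z₂ ≤ x}) = Φ(x) − 2·T(x, (1 − ρ)/√(1 − ρ²)). -/

import Mathlib

open MeasureTheory Real Set Filter Topology

/-- Standard normal cumulative distribution function. -/
noncomputable def Phi (x : ℝ) : ℝ :=
  ∫ t in Set.Iic x, Real.exp (-t ^ 2 / 2) / Real.sqrt (2 * Real.pi)

/-- Gaussian probability density with mean `m` and standard deviation `v`. -/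
noncomputable def gaussPdf (m v x : ℝ) : ℝ :=
  Real.exp (-(x - m) ^ 2 / (2 * v ^ 2)) / Real.sqrt (2 * Real.pi * v ^ 2)

/-- Owen's t-function. -/
noncomputable def OwenT (h a : ℝ) : ℝ :=
  (1 / (2 * Real.pi)) * ∫ x in (0:ℝ)..a, Real.exp (-h ^ 2 * (1 + x ^ 2) / 2) / (1 + x ^ 2)

/-- Density of the bivariate Gaussian with mean `(m₁, m₂)` and covariance matrix
`[[A, B], [B, A]]` (assumed positive definite, i.e. `A > |B|`). -/
noncomputable def biGaussDensity (m₁ m₂ A B : ℝ) (z : ℝ × ℝ) : ℝ :=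
  Real.exp (-(A * (z.1 - m₁) ^ 2 - 2 * B * (z.1 - m₁) * (z.2 - m₂) + A * (z.2 - m₂) ^ 2) /
      (2 * (A ^ 2 - B ^ 2))) / (2 * Real.pi * Real.sqrt (A ^ 2 - B ^ 2))

noncomputable def phi (t : ℝ) : ℝ := Real.exp (-t ^ 2 / 2) / Real.sqrt (2 * Real.pi)

lemma phi_eq (t : ℝ) : phi t = Real.exp (-(1/2) * t ^ 2) / Real.sqrt (2 * Real.pi) := by
  unfold phi; ring_nf

lemma continuous_phi : Continuous phi := by
  unfold phi
  fun_prop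

lemma phi_nonneg (t : ℝ) : 0 ≤ phi t :=
  div_nonneg (Real.exp_nonneg _) (Real.sqrt_nonneg _)

lemma integrable_phi : Integrable phi := by
  have h : Integrable (fun t : ℝ => Real.exp (-(1/2) * t ^ 2)) := integrable_exp_neg_mul_sq (by norm_num)
  have : phi = fun t => Real.exp (-(1/2) * t ^ 2) * (Real.sqrt (2 * Real.pi))⁻¹ := by
    funext t; rw [phi_eq, div_eq_mul_inv]
  rw [this]; exact h.mul_const _

lemma integral_phi : ∫ t, phi t = 1 := by
  have h : ∫ t : ℝ, Real.exp (-(1/2) * t ^ 2) = Real.sqrt (Real.pi / (1/2)) := integral_gaussian (1/2)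
  have h2 : Real.pi / (1/2 : ℝ) = 2 * Real.pi := by ring
  have : (fun t => phi t) = fun t => Real.exp (-(1/2) * t ^ 2) * (Real.sqrt (2 * Real.pi))⁻¹ := by
    funext t; rw [phi_eq, div_eq_mul_inv]
  rw [this, integral_mul_const, h, h2, mul_inv_cancel₀]
  positivity

lemma hasDerivAt_integral_Iic (g : ℝ → ℝ) (hg : Continuous g) (hgi : Integrable g) (x : ℝ) :
    HasDerivAt (fun y => ∫ t in Iic y, g t) (g x) x := by
  have heq : (fun y : ℝ => ∫ t in Iic y, g t)
      = fun y : ℝ => (∫ t in Iic (0:ℝ), g t) + ∫ t in (0:ℝ)..y, g t := by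
    funext y
    have h := intervalIntegral.integral_Iic_sub_Iic (f := g) (μ := volume)
      hgi.integrableOn hgi.integrableOn (a := 0) (b := y)
    linarith
  rw [heq]
  have h2 : HasDerivAt (fun y : ℝ => ∫ t in (0:ℝ)..y, g t) (g x) x :=
    intervalIntegral.integral_hasDerivAt_right hgi.intervalIntegrable
      (hg.stronglyMeasurableAtFilter _ _) hg.continuousAt
  simpa using h2.const_add (∫ t in Iic (0:ℝ), g t)

lemma tendsto_integral_Iic_atBot (g : ℝ → ℝ) (hgi : Integrable g) :
    Tendsto (fun y : ℝ => ∫ t in Iic y, g t) atBot (𝓝 0) := by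
  have h := intervalIntegral_tendsto_integral_Iic (f := g) (μ := volume) 0
    hgi.integrableOn (tendsto_id (α := ℝ) (x := atBot))
  have heq : (fun y : ℝ => ∫ t in Iic y, g t)
      = fun y : ℝ => (∫ t in Iic (0:ℝ), g t) - ∫ t in y..(0:ℝ), g t := by
    funext y
    have h2 := intervalIntegral.integral_Iic_sub_Iic (f := g) (μ := volume)
      hgi.integrableOn hgi.integrableOn (a := y) (b := 0)
    linarith
  rw [heq]
  have := (tendsto_const_nhds (x := ∫ t in Iic (0:ℝ), g t) (f := atBot (α := ℝ))).sub h
  simpa using this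



lemma Phi_eq (x : ℝ) : Phi x = ∫ t in Iic x, phi t := rfl

lemma hasDerivAt_Phi (x : ℝ) : HasDerivAt Phi (phi x) x := by
  have := hasDerivAt_integral_Iic phi continuous_phi integrable_phi x
  simpa [← Phi_eq] using this

lemma Phi_zero : Phi 0 = 1 / 2 := by
  have heven : ∀ t : ℝ, phi (-t) = phi t := fun t => by simp [phi, neg_sq]
  have h1 : (∫ t in Iic (0:ℝ), phi t) = ∫ t in Ioi (0:ℝ), phi t := by
    have h := integral_comp_neg_Iic (0:ℝ) phi
    simp only [heven, neg_zero] at h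
    rw [h]
  have h2 := intervalIntegral.integral_Iic_add_Ioi (f := phi) (μ := volume) (b := 0)
    integrable_phi.integrableOn integrable_phi.integrableOn
  rw [integral_phi] at h2
  rw [Phi_eq]
  linarith [h1, h2]

lemma Phi_tendsto_atBot : Tendsto Phi atBot (𝓝 0) := by
  simpa [← Phi_eq] using tendsto_integral_Iic_atBot phi integrable_phi

lemma Phi_nonneg (x : ℝ) : 0 ≤ Phi x := by
  rw [Phi_eq]
  exact setIntegral_nonneg measurableSet_Iic fun t _ => phi_nonneg t

lemma Phi_le_one (x : ℝ) : Phi x ≤ 1 := by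
  rw [Phi_eq, ← integral_phi]
  exact setIntegral_le_integral integrable_phi (Filter.Eventually.of_forall fun t => phi_nonneg t)

lemma Phi_sub_Phi (y z : ℝ) : Phi z - Phi y = ∫ t in y..z, phi t :=
  intervalIntegral.integral_Iic_sub_Iic integrable_phi.integrableOn integrable_phi.integrableOn

lemma continuous_Phi : Continuous Phi := by
  have : Differentiable ℝ Phi := fun x => (hasDerivAt_Phi x).differentiableAt
  exact this.continuous


lemma one_add_sq_pos (t : ℝ) : (0:ℝ) < 1 + t ^ 2 := by positivity

lemma owen_integrand_cont (h : ℝ) :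
    Continuous (fun t : ℝ => Real.exp (-h ^ 2 * (1 + t ^ 2) / 2) / (1 + t ^ 2)) := by
  apply Continuous.div
  · fun_prop
  · fun_prop
  · intro t; exact (one_add_sq_pos t).ne'

lemma hasDerivAt_OwenT (a x : ℝ) :
    HasDerivAt (fun h => OwenT h a) (-(phi x * (Phi (a * x) - 1 / 2))) x := by
  set F : ℝ → ℝ → ℝ := fun h t => Real.exp (-h ^ 2 * (1 + t ^ 2) / 2) / (1 + t ^ 2) with hF
  set F' : ℝ → ℝ → ℝ := fun h t => -h * Real.exp (-h ^ 2 * (1 + t ^ 2) / 2) with hF'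
  have hdiff : ∀ t : ℝ, ∀ h : ℝ, HasDerivAt (fun h => F h t) (F' h t) h := by
    intro t h
    have hu : HasDerivAt (fun h : ℝ => -h ^ 2 * (1 + t ^ 2) / 2)
        (-h * (1 + t ^ 2)) h := by
      have : HasDerivAt (fun h : ℝ => h ^ 2) (2 * h) h := by
        simpa using (hasDerivAt_pow 2 h)
      have := ((this.neg.mul_const (1 + t ^ 2)).div_const 2)
      refine this.congr_deriv ?_
      ring
    have hexp := hu.exp
    have := hexp.div_const (1 + t ^ 2)
    refine this.congr_deriv ?_
    rw [hF']
    field_simp [hF', (one_add_sq_pos t).ne']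
  have key := intervalIntegral.hasDerivAt_integral_of_dominated_loc_of_deriv_le
    (F := F) (F' := F') (x₀ := x) (a := 0) (b := a) (μ := volume)
    (bound := fun _ => |x| + 1) (Metric.ball_mem_nhds x (by norm_num : (0:ℝ) < 1))
    (Filter.Eventually.of_forall fun h => (owen_integrand_cont h).aestronglyMeasurable)
    ((owen_integrand_cont x).intervalIntegrable 0 a)
    (by
      apply Continuous.aestronglyMeasurable
      fun_prop)
    (Filter.Eventually.of_forall fun t _ => by
      intro h hh
      have h1 : Real.exp (-h ^ 2 * (1 + t ^ 2) / 2) ≤ 1 := by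
        apply Real.exp_le_one_iff.mpr
        nlinarith [sq_nonneg h, sq_nonneg t]
      have h2 : |h| ≤ |x| + 1 := by
        have := Metric.mem_ball.mp hh
        rw [Real.dist_eq] at this
        have := abs_sub_abs_le_abs_sub h x
        linarith
      have : ‖F' h t‖ = |h| * Real.exp (-h ^ 2 * (1 + t ^ 2) / 2) := by
        rw [hF']
        simp [abs_mul, abs_of_nonneg (Real.exp_nonneg _)]
      rw [this]
      calc |h| * Real.exp (-h ^ 2 * (1 + t ^ 2) / 2) ≤ |h| * 1 :=
            mul_le_mul_of_nonneg_left h1 (abs_nonneg h)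
        _ ≤ |x| + 1 := by rw [mul_one]; exact h2)
    (intervalIntegrable_const)
    (Filter.Eventually.of_forall fun t _ => fun h _ => hdiff t h)
  obtain ⟨-, hder⟩ := key
  have hOwen : (fun h => OwenT h a) = fun h => (1 / (2 * Real.pi)) * ∫ t in (0:ℝ)..a, F h t := by
    funext h; rfl
  rw [hOwen]
  have := hder.const_mul (1 / (2 * Real.pi))
  refine this.congr_deriv (Eq.symm ?_)
  -- now evaluate (1/(2π)) * ∫ t in 0..a, F' x t
  have hsub : ∫ t in (0:ℝ)..a, F' x t = -(Real.exp (-x ^ 2 / 2) * ∫ u in (0:ℝ)..(x * a), Real.exp (-u ^ 2 / 2)) := by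
    have hcomp : x • ∫ t in (0:ℝ)..a, Real.exp (-(x * t) ^ 2 / 2)
        = ∫ u in (x*0:ℝ)..(x*a), Real.exp (-u ^ 2 / 2) := by
      exact intervalIntegral.smul_integral_comp_mul_left (fun u => Real.exp (-u ^ 2 / 2)) x
    have heq : ∀ t : ℝ, F' x t = -x * (Real.exp (-x^2/2) * Real.exp (-(x * t) ^ 2 / 2)) := by
      intro t
      rw [hF', ← Real.exp_add]
      ring_nf
    rw [intervalIntegral.integral_congr (fun t _ => heq t)]
    rw [show (fun t => -x * (Real.exp (-x^2/2) * Real.exp (-(x * t) ^ 2 / 2)))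
        = fun t => (-x * Real.exp (-x^2/2)) * Real.exp (-(x * t) ^ 2 / 2) from by funext t; ring]
    rw [intervalIntegral.integral_const_mul]
    rw [mul_zero] at hcomp
    rw [show (-x * Real.exp (-x^2/2)) * ∫ t in (0:ℝ)..a, Real.exp (-(x * t) ^ 2 / 2)
        = -(Real.exp (-x^2/2)) * (x • ∫ t in (0:ℝ)..a, Real.exp (-(x * t) ^ 2 / 2)) from by
      simp [smul_eq_mul]; ring]
    rw [hcomp]
    ring
  rw [hsub]
  have hPhi : Phi (a * x) - 1/2 = ∫ u in (0:ℝ)..(x * a), phi u := by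
    rw [← Phi_zero, Phi_sub_Phi, mul_comm a x]
  rw [hPhi]
  have hphiInt : ∫ u in (0:ℝ)..(x*a), phi u
      = (∫ u in (0:ℝ)..(x*a), Real.exp (-u ^ 2 / 2)) / Real.sqrt (2 * Real.pi) := by
    rw [← intervalIntegral.integral_div]
    rfl
  rw [hphiInt]
  have h2pi : Real.sqrt (2 * Real.pi) * Real.sqrt (2 * Real.pi) = 2 * Real.pi :=
    Real.mul_self_sqrt (by positivity)
  have hπ : (0:ℝ) < 2 * Real.pi := by positivity
  unfold phi
  rw [div_mul_div_comm, h2pi]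
  ring

lemma OwenT_tendsto_atBot (a : ℝ) : Tendsto (fun h => OwenT h a) atBot (𝓝 0) := by
  have hbound : ∀ h : ℝ, |OwenT h a| ≤ (1 / (2 * Real.pi)) * (Real.exp (-h ^ 2 / 2) * |a|) := by
    intro h
    have hI : ‖∫ t in (0:ℝ)..a, Real.exp (-h ^ 2 * (1 + t ^ 2) / 2) / (1 + t ^ 2)‖
        ≤ Real.exp (-h ^ 2 / 2) * |a - 0| := by
      apply intervalIntegral.norm_integral_le_of_norm_le_const
      intro t _
      have h1 : Real.exp (-h ^ 2 * (1 + t ^ 2) / 2) ≤ Real.exp (-h ^ 2 / 2) := by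
        apply Real.exp_le_exp.mpr
        nlinarith [sq_nonneg h, sq_nonneg t, sq_nonneg (h*t)]
      have h2 : (1:ℝ) ≤ 1 + t ^ 2 := by nlinarith [sq_nonneg t]
      rw [Real.norm_eq_abs, abs_div, abs_of_nonneg (Real.exp_nonneg _),
        abs_of_pos (one_add_sq_pos t)]
      calc Real.exp (-h ^ 2 * (1 + t ^ 2) / 2) / (1 + t ^ 2)
          ≤ Real.exp (-h ^ 2 * (1 + t ^ 2) / 2) := div_le_self (Real.exp_nonneg _) h2
        _ ≤ Real.exp (-h ^ 2 / 2) := h1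
    have hπ : (0:ℝ) < 1 / (2 * Real.pi) := by positivity
    rw [sub_zero] at hI
    unfold OwenT
    rw [abs_mul, abs_of_pos hπ]
    exact mul_le_mul_of_nonneg_left (by rwa [Real.norm_eq_abs] at hI) hπ.le
  have hexp : Tendsto (fun h : ℝ => (1 / (2 * Real.pi)) * (Real.exp (-h ^ 2 / 2) * |a|))
      atBot (𝓝 0) := by
    have h1 : Tendsto (fun h : ℝ => -h ^ 2 / 2) atBot atBot := by
      apply Tendsto.atBot_div_const (by norm_num : (0:ℝ) < 2)
      apply tendsto_neg_atTop_atBot.comp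
      have : Tendsto (fun h : ℝ => -h) atBot atTop := tendsto_neg_atBot_atTop
      have hp : Tendsto (fun y : ℝ => y ^ 2) atTop atTop := tendsto_pow_atTop (by norm_num)
      have := hp.comp this
      have heq : ((fun y : ℝ => y ^ 2) ∘ fun h : ℝ => -h) = fun h : ℝ => h ^ 2 := by
        funext h; simp [Function.comp, neg_pow]
      rwa [heq] at this
    have h2 : Tendsto (fun h : ℝ => Real.exp (-h ^ 2 / 2)) atBot (𝓝 0) :=
      Real.tendsto_exp_atBot.comp h1
    have := (h2.mul_const |a|).const_mul (1 / (2 * Real.pi))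
    simpa using this
  apply squeeze_zero_norm (fun h => ?_) hexp
  simpa [Real.norm_eq_abs] using hbound _

lemma keyIdentity (a x : ℝ) :
    2 * ∫ s in Iic x, phi s * Phi (a * s) = Phi x - 2 * OwenT x a := by
  set k : ℝ → ℝ := fun s => phi s * Phi (a * s) with hk
  have hk_cont : Continuous k :=
    continuous_phi.mul (continuous_Phi.comp (continuous_const.mul continuous_id))
  have hk_int : Integrable k := by
    apply Integrable.mono integrable_phi hk_cont.aestronglyMeasurable
    apply Filter.Eventually.of_forall
    intro s
    rw [hk, Real.norm_eq_abs, Real.norm_eq_abs, abs_of_nonneg (phi_nonneg s), abs_mul,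
      abs_of_nonneg (phi_nonneg s), abs_of_nonneg (Phi_nonneg _)]
    nlinarith [phi_nonneg s, Phi_nonneg (a * s), Phi_le_one (a * s)]
  set G : ℝ → ℝ := fun y => 2 * (∫ s in Iic y, k s) - Phi y + 2 * OwenT y a with hG
  have hG' : ∀ y, HasDerivAt G 0 y := by
    intro y
    have h1 := (hasDerivAt_integral_Iic k hk_cont hk_int y).const_mul 2
    have h2 := hasDerivAt_Phi y
    have h3 := (hasDerivAt_OwenT a y).const_mul 2
    have h4 := (h1.sub h2).add h3
    refine h4.congr_deriv ?_
    rw [hk]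
    ring
  have hdiff : Differentiable ℝ G := fun t => (hG' t).differentiableAt
  have hderiv0 : ∀ t, deriv G t = 0 := fun t => (hG' t).deriv
  have hconst : ∀ y, G y = G x := fun y => is_const_of_deriv_eq_zero hdiff hderiv0 y x
  have hlim : Tendsto G atBot (𝓝 0) := by
    have hIic : Tendsto (fun y => ∫ s in Iic y, k s) atBot (𝓝 0) :=
      tendsto_integral_Iic_atBot k hk_int
    have := ((hIic.const_mul 2).sub Phi_tendsto_atBot).add
      ((OwenT_tendsto_atBot a).const_mul 2)
    simpa [hG] using this
  have hGx : G x = 0 := by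
    have : Tendsto (fun _ : ℝ => G x) atBot (𝓝 (G x)) := tendsto_const_nhds
    have h2 : Tendsto (fun y : ℝ => G y) atBot (𝓝 (G x)) := by
      apply this.congr
      intro y
      exact (hconst y).symm
    exact tendsto_nhds_unique h2 hlim
  rw [hG] at hGx
  simp only at hGx
  linarith

lemma affine_map_volume (c m : ℝ) (hc : 0 < c) :
    Measure.map (fun u : ℝ => c * u + m) volume = ENNReal.ofReal c⁻¹ • volume := by
  have h1 : (fun u : ℝ => c * u + m) = (fun v : ℝ => v + m) ∘ (fun u : ℝ => c * u) := rfl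
  rw [h1, ← Measure.map_map (measurable_add_const m) (measurable_const_mul c),
    Real.map_volume_mul_left hc.ne', Measure.map_smul,
    map_add_right_eq_self volume m, abs_inv, abs_of_pos hc]

lemma affine_emb (c m : ℝ) (hc : 0 < c) :
    MeasurableEmbedding (fun u : ℝ => c * u + m) := by
  have h : (fun u : ℝ => c * u + m)
      = (((Homeomorph.mulLeft₀ c hc.ne').trans (Homeomorph.addRight m)) : ℝ ≃ₜ ℝ) := rfl
  exact h ▸ (((Homeomorph.mulLeft₀ c hc.ne').trans (Homeomorph.addRight m)).isClosedEmbedding.measurableEmbedding)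

lemma affine_preimage_Iic (c m y : ℝ) (hc : 0 < c) :
    (fun u : ℝ => c * u + m) ⁻¹' (Iic y) = Iic ((y - m) / c) := by
  ext u
  simp only [mem_preimage, mem_Iic]
  rw [le_div_iff₀ hc]
  constructor <;> intro h <;> nlinarith

lemma integral_Iic_affine (c m y : ℝ) (hc : 0 < c) (f : ℝ → ℝ) :
    ∫ t in Iic y, f ((t - m) / c) = c * ∫ u in Iic ((y - m) / c), f u := by
  have hemb := affine_emb c m hc
  have h := hemb.setIntegral_map (μ := volume) (fun t => f ((t - m) / c)) (Iic y)
  rw [affine_map_volume c m hc, Measure.restrict_smul, integral_smul_measure, affine_preimage_Iic c m y hc] at h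
  have harg : ∀ u : ℝ, f ((c * u + m - m) / c) = f u := by
    intro u
    congr 1
    field_simp
    ring
  simp only [harg] at h
  rw [ENNReal.toReal_ofReal (by positivity : (0:ℝ) ≤ c⁻¹), smul_eq_mul] at h
  rw [← h]
  field_simp

lemma integrable_shift_scale (c m : ℝ) (hc : 0 < c) :
    Integrable (fun t : ℝ => phi ((t - m) / c) / c) := by
  have hemb := affine_emb c m hc
  have h := hemb.integrable_map_iff (f := fun u : ℝ => c * u + m)
    (g := fun t : ℝ => phi ((t - m) / c) / c) (μ := volume)
  rw [affine_map_volume c m hc] at h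
  have h2 : Integrable ((fun t : ℝ => phi ((t - m) / c) / c) ∘ fun u : ℝ => c * u + m) volume := by
    have harg : ((fun t : ℝ => phi ((t - m) / c) / c) ∘ fun u : ℝ => c * u + m)
        = fun u : ℝ => phi u / c := by
      funext u
      simp only [Function.comp]
      congr 1
      · congr 1
        field_simp
        ring
    rw [harg]
    exact integrable_phi.div_const c
  have h3 := h.mpr h2
  have hne : ENNReal.ofReal c⁻¹ ≠ 0 := by
    have : (0:ℝ) < c⁻¹ := by positivity
    exact (ENNReal.ofReal_pos.mpr this).ne'
  exact (integrable_smul_measure hne (by simp : ENNReal.ofReal c⁻¹ ≠ ⊤)).mp h3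


lemma densEq {ρ : ℝ} (hρ1 : -1 < ρ) (hρ2 : ρ < 1) (s t : ℝ) :
    biGaussDensity 0 0 1 ρ (s, t)
      = phi s * (phi ((t - ρ * s) / Real.sqrt (1 - ρ ^ 2)) / Real.sqrt (1 - ρ ^ 2)) := by
  set c := Real.sqrt (1 - ρ ^ 2) with hcdef
  have h1 : (0:ℝ) < 1 - ρ ^ 2 := by nlinarith
  have hc : 0 < c := Real.sqrt_pos.mpr h1
  have hc2 : c ^ 2 = 1 - ρ ^ 2 := Real.sq_sqrt h1.le
  unfold biGaussDensity phi
  simp only [sub_zero, one_pow, one_mul]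
  have hexp : -(s ^ 2 - 2 * ρ * s * t + t ^ 2) / (2 * (1 - ρ ^ 2))
      = -s ^ 2 / 2 + -((t - ρ * s) / c) ^ 2 / 2 := by
    rw [div_pow, hc2]
    field_simp
    ring
  rw [hexp, Real.exp_add]
  have h2pi : Real.sqrt (2 * Real.pi) * Real.sqrt (2 * Real.pi) = 2 * Real.pi :=
    Real.mul_self_sqrt (by positivity)
  have hs2 : Real.sqrt (2 * Real.pi) ≠ 0 := by positivity
  field_simp
  ring_nf
  rw [Real.sq_sqrt (by positivity : (0:ℝ) ≤ π * 2), hcdef]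
  ring

lemma densSymm {ρ : ℝ} (s t : ℝ) :
    biGaussDensity 0 0 1 ρ (t, s) = biGaussDensity 0 0 1 ρ (s, t) := by
  unfold biGaussDensity
  simp only
  congr 2
  ring

lemma densCont {ρ : ℝ} : Continuous (fun z : ℝ × ℝ => biGaussDensity 0 0 1 ρ z) := by
  unfold biGaussDensity
  fun_prop

lemma densNonneg {ρ : ℝ} (z : ℝ × ℝ) : 0 ≤ biGaussDensity 0 0 1 ρ z := by
  unfold biGaussDensity
  positivity

lemma diag_null : (volume : Measure (ℝ × ℝ)) {z : ℝ × ℝ | z.1 = z.2} = 0 := by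
  have hm : MeasurableSet {z : ℝ × ℝ | z.1 = z.2} :=
    (isClosed_eq continuous_fst continuous_snd).measurableSet
  rw [Measure.volume_eq_prod, Measure.prod_apply hm]
  have : ∀ s : ℝ, (volume : Measure ℝ) (Prod.mk s ⁻¹' {z : ℝ × ℝ | z.1 = z.2}) = 0 := by
    intro s
    have : (Prod.mk s ⁻¹' {z : ℝ × ℝ | z.1 = z.2}) = {s} := by
      ext t; simp [eq_comm]
    rw [this]
    exact measure_singleton s
  simp [this]

lemma integral_shift_scale (c m : ℝ) (hc : 0 < c) :
    ∫ t, phi ((t - m) / c) / c = 1 := by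
  have hemb := affine_emb c m hc
  have h := hemb.integral_map (μ := volume) (g := fun t : ℝ => phi ((t - m) / c) / c)
  rw [affine_map_volume c m hc, integral_smul_measure] at h
  have harg : ∀ u : ℝ, phi ((c * u + m - m) / c) / c = phi u / c := by
    intro u; congr 2; field_simp; ring
  simp only [harg] at h
  rw [ENNReal.toReal_ofReal (by positivity : (0:ℝ) ≤ c⁻¹), smul_eq_mul] at h
  have h2 : ∫ u, phi u / c = 1 / c := by
    rw [integral_div, integral_phi]
  rw [h2] at h
  have : ∫ t, phi ((t - m) / c) / c = c * (c⁻¹ * ∫ t, phi ((t - m) / c) / c) := by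
    field_simp
  rw [this, h]
  field_simp

lemma integrable_dens {ρ : ℝ} (hρ1 : -1 < ρ) (hρ2 : ρ < 1) :
    Integrable (fun z : ℝ × ℝ => biGaussDensity 0 0 1 ρ z) volume := by
  set c := Real.sqrt (1 - ρ ^ 2) with hcdef
  have h1 : (0:ℝ) < 1 - ρ ^ 2 := by nlinarith
  have hc : 0 < c := Real.sqrt_pos.mpr h1
  rw [Measure.volume_eq_prod]
  rw [integrable_prod_iff (by
    rw [← Measure.volume_eq_prod]; exact densCont.aestronglyMeasurable)]
  constructor
  · apply Filter.Eventually.of_forall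
    intro s
    have : (fun t => biGaussDensity 0 0 1 ρ (s, t))
        = fun t => phi s * (phi ((t - ρ * s) / c) / c) := by
      funext t; exact densEq hρ1 hρ2 s t
    rw [this]
    exact (integrable_shift_scale c (ρ * s) hc).const_mul _
  · have heq : (fun s => ∫ t, ‖biGaussDensity 0 0 1 ρ (s, t)‖) = phi := by
      funext s
      have h2 : ∀ t, ‖biGaussDensity 0 0 1 ρ (s, t)‖ = phi s * (phi ((t - ρ * s) / c) / c) := by
        intro t
        rw [Real.norm_eq_abs, abs_of_nonneg (densNonneg _), densEq hρ1 hρ2 s t]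
      simp only [h2]
      rw [MeasureTheory.integral_const_mul, integral_shift_scale c (ρ * s) hc, mul_one]
    rw [heq]
    exact integrable_phi

lemma measSide {ρ : ℝ} (hρ1 : -1 < ρ) (hρ2 : ρ < 1) (x : ℝ) :
    (((volume : Measure (ℝ × ℝ)).withDensity
          (fun z => ENNReal.ofReal (biGaussDensity 0 0 1 ρ z)))
          {z : ℝ × ℝ | z.1 ≤ x ∧ z.2 ≤ x}).toReal
      = 2 * ∫ s in Iic x, phi s * Phi (((1 - ρ) / Real.sqrt (1 - ρ ^ 2)) * s) := by
  set c := Real.sqrt (1 - ρ ^ 2) with hcdef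
  set a := (1 - ρ) / c with hadef
  have h1 : (0:ℝ) < 1 - ρ ^ 2 := by nlinarith
  have hc : 0 < c := Real.sqrt_pos.mpr h1
  set d : ℝ × ℝ → ℝ := fun z => biGaussDensity 0 0 1 ρ z with hddef
  have hd_int : Integrable d := integrable_dens hρ1 hρ2
  set S : Set (ℝ × ℝ) := {z : ℝ × ℝ | z.1 ≤ x ∧ z.2 ≤ x} with hSdef
  have hS : MeasurableSet S := by
    have : S = Iic x ×ˢ Iic x := by
      ext z; simp only [hSdef, Set.mem_setOf_eq, Set.mem_prod, Set.mem_Iic]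
    rw [this]; exact measurableSet_Iic.prod measurableSet_Iic
  -- step 1 : toReal of withDensity = set integral
  have step1 : (((volume : Measure (ℝ × ℝ)).withDensity
      (fun z => ENNReal.ofReal (d z))) S).toReal = ∫ z in S, d z := by
    rw [withDensity_apply _ hS,
      ← ofReal_integral_eq_lintegral_ofReal hd_int.integrableOn
        (Filter.Eventually.of_forall fun z => densNonneg z),
      ENNReal.toReal_ofReal (setIntegral_nonneg hS fun z _ => densNonneg z)]
  -- sets
  set T1 : Set (ℝ × ℝ) := {z : ℝ × ℝ | z.2 ≤ z.1} ∩ S with hT1def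
  set T1' : Set (ℝ × ℝ) := {z : ℝ × ℝ | z.2 < z.1} ∩ S with hT1'def
  set T2 : Set (ℝ × ℝ) := {z : ℝ × ℝ | z.1 < z.2} ∩ S with hT2def
  have hT1 : MeasurableSet T1 :=
    ((isClosed_le continuous_snd continuous_fst).measurableSet).inter hS
  have hT1' : MeasurableSet T1' :=
    ((isOpen_lt continuous_snd continuous_fst).measurableSet).inter hS
  have hT2 : MeasurableSet T2 :=
    ((isOpen_lt continuous_fst continuous_snd).measurableSet).inter hS
  -- step 2 : split
  have hunion : S = T1 ∪ T2 := by
    ext z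
    simp only [hT1def, hT2def, Set.mem_union, Set.mem_inter_iff, Set.mem_setOf_eq]
    rcases le_or_gt z.2 z.1 with h | h
    · tauto
    · tauto
  have hdisj : Disjoint T1 T2 := by
    rw [Set.disjoint_left]
    rintro z ⟨h1', _⟩ ⟨h2', _⟩
    simp only [Set.mem_setOf_eq] at h1' h2'
    exact absurd h1' (not_le.mpr h2')
  have step2 : ∫ z in S, d z = (∫ z in T1, d z) + ∫ z in T2, d z := by
    rw [hunion]
    exact setIntegral_union hdisj hT2 hd_int.integrableOn hd_int.integrableOn
  -- step 3 : swap
  have step3 : ∫ z in T2, d z = ∫ z in T1', d z := by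
    have hmp : MeasurePreserving (Prod.swap : ℝ × ℝ → ℝ × ℝ)
        ((volume : Measure ℝ).prod volume) ((volume : Measure ℝ).prod volume) :=
      Measure.measurePreserving_swap
    have hswap := hmp.setIntegral_preimage_emb
      MeasurableEquiv.prodComm.measurableEmbedding d T2
    have hpre : (Prod.swap : ℝ × ℝ → ℝ × ℝ) ⁻¹' T2 = T1' := by
      ext z
      simp only [hT2def, hT1'def, hSdef, Set.mem_preimage, Set.mem_inter_iff,
        Set.mem_setOf_eq, Prod.fst_swap, Prod.snd_swap]
      tauto
    have hcomp : ∀ z : ℝ × ℝ, d (Prod.swap z) = d z := fun z => densSymm z.1 z.2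
    rw [hpre] at hswap
    simp only [hcomp] at hswap
    rw [← Measure.volume_eq_prod] at hswap
    exact hswap.symm
  -- step 4 : T1' ae eq T1
  have step4 : ∫ z in T1', d z = ∫ z in T1, d z := by
    apply setIntegral_congr_set
    rw [MeasureTheory.ae_eq_set]
    constructor
    · have : T1' \ T1 = ∅ := by
        apply Set.eq_empty_of_subset_empty
        rintro z ⟨⟨h1', h2'⟩, h3'⟩
        simp only [Set.mem_setOf_eq] at h1'
        exact h3' ⟨show z.2 ≤ z.1 from h1'.le, h2'⟩
      simp [this]
    · have hsub : T1 \ T1' ⊆ {z : ℝ × ℝ | z.1 = z.2} := by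
        rintro z ⟨⟨h1', h2'⟩, h3'⟩
        simp only [Set.mem_setOf_eq] at h1'
        have : ¬ z.2 < z.1 := fun hlt => h3' ⟨show z.2 < z.1 from hlt, h2'⟩
        show z.1 = z.2
        exact le_antisymm (not_lt.mp this) h1'
      exact measure_mono_null hsub diag_null
  -- step 5 : Fubini on T1
  have hT1mem : ∀ z : ℝ × ℝ, z ∈ T1 ↔ z.1 ≤ x ∧ z.2 ≤ z.1 := by
    intro z
    simp only [hT1def, hSdef, Set.mem_inter_iff, Set.mem_setOf_eq]
    constructor
    · rintro ⟨h1', h2', h3'⟩; exact ⟨h2', h1'⟩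
    · rintro ⟨h1', h2'⟩; exact ⟨h2', h1', h2'.trans h1'⟩
  have step5 : ∫ z in T1, d z = ∫ s in Iic x, phi s * Phi (a * s) := by
    rw [← MeasureTheory.integral_indicator hT1]
    have hint_ind : Integrable (T1.indicator d) := hd_int.indicator hT1
    rw [Measure.volume_eq_prod] at hint_ind ⊢
    have hfub := MeasureTheory.integral_integral
      (f := fun s t => T1.indicator d (s, t)) (μ := (volume : Measure ℝ))
      (ν := (volume : Measure ℝ)) (by exact hint_ind)
    rw [← hfub]
    have hinner : ∀ s : ℝ, (∫ t, T1.indicator d (s, t))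
        = (Iic x).indicator (fun s => phi s * Phi (a * s)) s := by
      intro s
      rcases le_or_gt s x with hsx | hsx
      · have hind : (fun t => T1.indicator d (s, t))
            = (Iic s).indicator (fun t => d (s, t)) := by
          funext t
          by_cases ht : t ≤ s
          · rw [Set.indicator_of_mem ((hT1mem (s, t)).mpr ⟨hsx, ht⟩),
              Set.indicator_of_mem (by exact ht)]
          · rw [Set.indicator_of_notMem (fun h => ht ((hT1mem (s, t)).mp h).2),
              Set.indicator_of_notMem (by exact ht)]
        rw [hind, MeasureTheory.integral_indicator measurableSet_Iic]
        have hdens : ∀ t : ℝ, d (s, t) = phi s * (phi ((t - ρ * s) / c) / c) :=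
          fun t => densEq hρ1 hρ2 s t
        rw [setIntegral_congr_fun measurableSet_Iic (fun t _ => hdens t)]
        rw [show (fun t : ℝ => phi s * (phi ((t - ρ * s) / c) / c))
            = fun t : ℝ => (phi s / c) * phi ((t - ρ * s) / c) from by funext t; ring]
        rw [MeasureTheory.integral_const_mul, integral_Iic_affine c (ρ * s) s hc phi]
        rw [Set.indicator_of_mem (by exact hsx)]
        rw [← Phi_eq]
        have harg : (s - ρ * s) / c = a * s := by
          rw [hadef]; field_simp
        rw [harg]
        field_simp
      · have hind : ∀ t : ℝ, T1.indicator d (s, t) = 0 := by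
          intro t
          exact Set.indicator_of_notMem
            (fun h => absurd ((hT1mem (s, t)).mp h).1 (not_le.mpr hsx)) _
        simp only [hind, integral_zero]
        rw [Set.indicator_of_notMem (by exact not_le.mpr hsx)]
    simp only [hinner]
    rw [MeasureTheory.integral_indicator measurableSet_Iic]
  -- conclude
  calc (((volume : Measure (ℝ × ℝ)).withDensity
      (fun z => ENNReal.ofReal (d z))) S).toReal
      = ∫ z in S, d z := step1
    _ = (∫ z in T1, d z) + ∫ z in T2, d z := step2
    _ = (∫ z in T1, d z) + ∫ z in T1, d z := by rw [step3, step4]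
    _ = 2 * ∫ s in Iic x, phi s * Phi (a * s) := by rw [step5]; ring

theorem stmt_3 (ρ x : ℝ) (hρ : ρ ∈ Set.Ioo (-1 : ℝ) 1) :
    (((volume : Measure (ℝ × ℝ)).withDensity
          (fun z => ENNReal.ofReal (biGaussDensity 0 0 1 ρ z)))
          {z : ℝ × ℝ | z.1 ≤ x ∧ z.2 ≤ x}).toReal
      = Phi x - 2 * OwenT x ((1 - ρ) / Real.sqrt (1 - ρ ^ 2)) := by
  obtain ⟨hρ1, hρ2⟩ := hρ
  rw [measSide hρ1 hρ2 x]
  exact keyIdentity ((1 - ρ) / Real.sqrt (1 - ρ ^ 2)) x
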